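/- Let F be a field with an absolute value, φ = ∑_{i=1}^h cᵢxᵢ a linear form with coefficients in F, C = ∑_{i=1}^h |cᵢ|, and X a subset of F with φ(X) ⊆ X. If A is a φ-Sidon subset of X, then A(t) ≤ X(Ct)^{1/h} for all t ≥ 0, where A(t) = |{a ∈ A : |a| ≤ t}| and X(t) = |{x ∈ X : |x| ≤ t}|. -/
import Mathlib


open Finset

variable {F : Type*} [Field F] {V : Type*} [AddCommGroup V] [Module F V]

/-- The linear form with coefficients `c` has property N: there do not exist disjoint
subsets `I₁`, `I₂` of `{1,…,h}`, not both empty, with equal coefficient subset sums. -/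
def PropN {h : ℕ} (c : Fin h → F) : Prop :=
  ¬ ∃ I₁ I₂ : Finset (Fin h), Disjoint I₁ I₂ ∧ ¬(I₁ = ∅ ∧ I₂ = ∅) ∧
      ∑ i ∈ I₁, c i = ∑ i ∈ I₂, c i

/-- `A` is a Sidon set for the linear form `φ = ∑ cᵢ xᵢ`. -/
def IsSidonSet {h : ℕ} (c : Fin h → F) (A : Set V) : Prop :=
  A.Nonempty ∧ ∀ a a' : Fin h → V, (∀ i, a i ∈ A) → (∀ i, a' i ∈ A) →
    ∑ i, c i • a i = ∑ i, c i • a' i → a = a'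

/-- `Φ_J(A,b) = φ_J(A) + (∑_{j ∈ Jᶜ} c_j) • b`. -/
def PhiJ {h : ℕ} (c : Fin h → F) (J : Finset (Fin h)) (A : Set V) (b : V) : Set V :=
  {w | ∃ f : Fin h → V, (∀ j ∈ J, f j ∈ A) ∧
    w = (∑ j ∈ J, c j • f j) + (∑ j ∈ Jᶜ, c j) • b}

theorem sidon_counting_bound {F : Type*} [Field F] (v : AbsoluteValue F ℝ)
    {h : ℕ} (hh : 0 < h) (c : Fin h → F)
    (X : Set F) (hXfin : ∀ s : ℝ, {x ∈ X | v x ≤ s}.Finite)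
    (hXcl : ∀ f : Fin h → F, (∀ i, f i ∈ X) → (∑ i, c i * f i) ∈ X)
    (A : Set F) (hAX : A ⊆ X) (hA : IsSidonSet c A)
    (t : ℝ) (ht : 0 ≤ t) :
    (({a ∈ A | v a ≤ t}.ncard : ℝ)) ≤
      (({x ∈ X | v x ≤ (∑ i, v (c i)) * t}.ncard : ℝ)) ^ ((1 : ℝ) / h) := by
  set S : Set F := {a ∈ A | v a ≤ t} with hSdef
  set T : Set F := {x ∈ X | v x ≤ (∑ i, v (c i)) * t} with hTdef
  have hSfin : S.Finite := (hXfin t).subset (fun x hx => ⟨hAX hx.1, hx.2⟩)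
  have hTfin : T.Finite := hXfin _
  -- the map
  have hmap : ∀ f : Fin h → S, (∑ i, c i * (f i : F)) ∈ T := by
    intro f
    refine ⟨hXcl _ (fun i => hAX (f i).2.1), ?_⟩
    calc v (∑ i, c i * (f i : F)) ≤ ∑ i, v (c i * (f i : F)) := v.sum_le _ _
      _ = ∑ i, v (c i) * v ((f i : F)) := by simp [v.map_mul]
      _ ≤ ∑ i, v (c i) * t := by
          exact Finset.sum_le_sum fun i _ =>
            mul_le_mul_of_nonneg_left (f i).2.2 (v.nonneg _)
      _ = (∑ i, v (c i)) * t := by rw [Finset.sum_mul]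
  let g : (Fin h → S) → T := fun f => ⟨∑ i, c i * (f i : F), hmap f⟩
  have hginj : Function.Injective g := by
    intro f f' hff
    have := hA.2 (fun i => (f i : F)) (fun i => (f' i : F))
      (fun i => (f i).2.1) (fun i => (f' i).2.1)
      (by simpa [smul_eq_mul] using congrArg Subtype.val hff)
    funext i
    exact Subtype.ext (congrFun this i)
  have hfinT : Finite T := hTfin
  have hcard : S.ncard ^ h ≤ T.ncard := by
    have h1 : Nat.card (Fin h → S) ≤ Nat.card T :=
      Nat.card_le_card_of_injective g hginj
    rwa [Nat.card_fun, Nat.card_eq_fintype_card (α := Fin h), Fintype.card_fin,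
      Nat.card_coe_set_eq, Nat.card_coe_set_eq] at h1
  have hcardR : ((S.ncard : ℝ)) ^ (h : ℕ) ≤ (T.ncard : ℝ) := by exact_mod_cast hcard
  have hSnn : (0 : ℝ) ≤ (S.ncard : ℝ) := Nat.cast_nonneg _
  have hTnn : (0 : ℝ) ≤ (T.ncard : ℝ) := Nat.cast_nonneg _
  have hexp : (0 : ℝ) ≤ 1 / h := by positivity
  calc (S.ncard : ℝ) = (((S.ncard : ℝ)) ^ (h : ℕ)) ^ ((1 : ℝ) / h) := by
        rw [← Real.rpow_natCast ((S.ncard : ℝ)) h, ← Real.rpow_mul hSnn]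
        rw [mul_one_div, div_self (by exact_mod_cast hh.ne'), Real.rpow_one]
    _ ≤ (T.ncard : ℝ) ^ ((1 : ℝ) / h) :=
        Real.rpow_le_rpow (by positivity) hcardR hexp
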